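/- The Diophantine equation x^3 - y^3 = a^6 - b^6 has infinitely many solutions in positive integers (x,y,a,b) with gcd(x,y,a,b)=1 and x,y,a,b ≥ 1. Explicitly, for each positive integer t, taking u=3t+1, v=6t+1, the quadruple x = 3u(v^3-3u^3), y = v(9u^3-v^3), a = v^2, b = 3u^2 is such a solution, and these solutions are pairwise distinct. -/

import Mathlib

lemma mem_aux (t : ℤ) (ht : 0 < t) :
    (3*(3*t+1)*((6*t+1)^3-3*(3*t+1)^3),
      (6*t+1)*(9*(3*t+1)^3-(6*t+1)^3),
      (6*t+1)^2, 3*(3*t+1)^2) ∈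
      {q : ℤ × ℤ × ℤ × ℤ |
        0 < q.1 ∧ 0 < q.2.1 ∧ 0 < q.2.2.1 ∧ 0 < q.2.2.2 ∧
        Int.gcd q.1 (Int.gcd q.2.1 (Int.gcd q.2.2.1 q.2.2.2)) = 1 ∧
        q.1^3 - q.2.1^3 = q.2.2.1^6 - q.2.2.2^6} := by
  have hg : Int.gcd ((6*t+1)^2) (3*(3*t+1)^2) = 1 := by
    rw [← Int.isCoprime_iff_gcd_eq_one]
    have h1 : IsCoprime (6*t+1) (3*t+1 : ℤ) := ⟨-1, 2, by ring⟩
    have h2 : IsCoprime (6*t+1) (3:ℤ) := ⟨1, -2*t, by ring⟩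
    exact (h2.mul_right h1.pow_right).pow_left
  simp only [Set.mem_setOf_eq]
  have h3 : (0:ℤ) < t^3 := pow_pos ht 3
  have h2 : (0:ℤ) < t^2 := pow_pos ht 2
  refine ⟨by nlinarith, by nlinarith, by positivity, by positivity, ?_, by ring⟩
  rw [hg]
  simp [Int.gcd]

theorem stmt_14 :
    ({q : ℤ × ℤ × ℤ × ℤ |
        0 < q.1 ∧ 0 < q.2.1 ∧ 0 < q.2.2.1 ∧ 0 < q.2.2.2 ∧
        Int.gcd q.1 (Int.gcd q.2.1 (Int.gcd q.2.2.1 q.2.2.2)) = 1 ∧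
        q.1^3 - q.2.1^3 = q.2.2.1^6 - q.2.2.2^6}.Infinite) ∧
    (∀ t : ℤ, 0 < t →
      (3*(3*t+1)*((6*t+1)^3-3*(3*t+1)^3),
        (6*t+1)*(9*(3*t+1)^3-(6*t+1)^3),
        (6*t+1)^2, 3*(3*t+1)^2) ∈
        {q : ℤ × ℤ × ℤ × ℤ |
          0 < q.1 ∧ 0 < q.2.1 ∧ 0 < q.2.2.1 ∧ 0 < q.2.2.2 ∧
          Int.gcd q.1 (Int.gcd q.2.1 (Int.gcd q.2.2.1 q.2.2.2)) = 1 ∧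
          q.1^3 - q.2.1^3 = q.2.2.1^6 - q.2.2.2^6}) ∧
    (∀ t s : ℤ, 0 < t → 0 < s →
      (3*(3*t+1)*((6*t+1)^3-3*(3*t+1)^3),
        (6*t+1)*(9*(3*t+1)^3-(6*t+1)^3),
        (6*t+1)^2, 3*(3*t+1)^2) =
      (3*(3*s+1)*((6*s+1)^3-3*(3*s+1)^3),
        (6*s+1)*(9*(3*s+1)^3-(6*s+1)^3),
        (6*s+1)^2, 3*(3*s+1)^2) → t = s) := by
  refine ⟨?_, mem_aux, ?_⟩
  · apply Set.infinite_of_injective_forall_mem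
      (f := fun n : ℕ => (3*(3*((n:ℤ)+1)+1)*((6*((n:ℤ)+1)+1)^3-3*(3*((n:ℤ)+1)+1)^3),
        (6*((n:ℤ)+1)+1)*(9*(3*((n:ℤ)+1)+1)^3-(6*((n:ℤ)+1)+1)^3),
        (6*((n:ℤ)+1)+1)^2, 3*(3*((n:ℤ)+1)+1)^2))
    · intro n m h
      have h3 : (6*((n:ℤ)+1)+1)^2 = (6*((m:ℤ)+1)+1)^2 := congrArg (fun q => q.2.2.1) h
      have hn : (0:ℤ) ≤ n := Int.ofNat_nonneg n
      have hm : (0:ℤ) ≤ m := Int.ofNat_nonneg m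
      have h4 : (36*((n:ℤ)+1)+36*((m:ℤ)+1)+12)*((n:ℤ)-m) = 0 := by linear_combination h3
      have : (n:ℤ) = m := by
        rcases mul_eq_zero.mp h4 with h5 | h5
        · linarith
        · linarith
      exact_mod_cast this
    · intro n
      exact mem_aux ((n:ℤ)+1) (by positivity)
  · intro t s ht hs h
    have h3 : (6*t+1)^2 = (6*s+1)^2 := congrArg (fun q => q.2.2.1) h
    have h4 : (36*t+36*s+12)*(t-s) = 0 := by linear_combination h3
    rcases mul_eq_zero.mp h4 with h5 | h5
    · linarith
    · linarith
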